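/- Let A be a closed dissipative operator on a separable complex Hilbert space H such that the eigenspace ker(A* − i) = {x ∈ D(A*) : A*x = i·x} is finite dimensional, and let Â be a dissipative extension of A. Then Â is maximally dissipative if and only if the dimension of the quotient space D(Â)/D(A) equals dim ker(A* − i). -/

import Mathlib

noncomputable section

open Complex

variable {H : Type*} [NormedAddCommGroup H] [InnerProductSpace ℂ H] [CompleteSpace H]

local notation "⟪" x ", " y "⟫" => @inner ℂ _ _ x y

/-- A partially defined operator is *dissipative* if `Im ⟪ψ, A ψ⟫ ≥ 0` for all `ψ` in its
domain. -/
def Dissipative (A : H →ₗ.[ℂ] H) : Prop :=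
  ∀ ψ : A.domain, 0 ≤ (⟪(ψ : H), A ψ⟫).im

/-- A partially defined operator is *symmetric* if `⟪f, S g⟫ = ⟪S f, g⟫` on its domain. -/
def IsSymmetricP (S : H →ₗ.[ℂ] H) : Prop :=
  ∀ f g : S.domain, ⟪(f : H), S g⟫ = ⟪S f, (g : H)⟫

/-- A partially defined operator is *non-negative* if `⟪f, V f⟫` is real and `≥ 0` on its
domain. -/
def NonnegP (V : H →ₗ.[ℂ] H) : Prop :=
  ∀ f : V.domain, (⟪(f : H), V f⟫).im = 0 ∧ 0 ≤ (⟪(f : H), V f⟫).re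

/-- The eigenspace `ker (A* - i)` of the adjoint of `A`. -/
def eigenspaceI (A : H →ₗ.[ℂ] H) : Submodule ℂ A.adjoint.domain :=
  LinearMap.ker (A.adjoint.toFun - Complex.I • A.adjoint.domain.subtype)

/-- A dissipative operator is *maximally dissipative* if it has no nontrivial dissipative
extension. -/
def MaximallyDissipative (A : H →ₗ.[ℂ] H) : Prop :=
  Dissipative A ∧ ∀ B : H →ₗ.[ℂ] H, A ≤ B → Dissipative B → B = A


set_option linter.unusedSectionVars false

/-- `B + i` as a linear map on the domain. -/
def plusI (B : H →ₗ.[ℂ] H) : B.domain →ₗ[ℂ] H :=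
  B.toFun + Complex.I • B.domain.subtype

def minusI (B : H →ₗ.[ℂ] H) : B.domain →ₗ[ℂ] H :=
  B.toFun - Complex.I • B.domain.subtype

lemma plusI_apply (B : H →ₗ.[ℂ] H) (ψ : B.domain) :
    plusI B ψ = B ψ + Complex.I • (ψ : H) := rfl

lemma minusI_apply (B : H →ₗ.[ℂ] H) (ψ : B.domain) :
    minusI B ψ = B ψ - Complex.I • (ψ : H) := rfl

lemma norm_plusI_sq (B : H →ₗ.[ℂ] H) (ψ : B.domain) :
    ‖plusI B ψ‖ ^ 2 = ‖B ψ‖ ^ 2 + ‖(ψ : H)‖ ^ 2 + 2 * (⟪(ψ : H), B ψ⟫).im := by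
  rw [plusI_apply, @norm_add_sq ℂ]
  have : (RCLike.re ⟪B ψ, Complex.I • (ψ:H)⟫ : ℝ) = (⟪(ψ : H), B ψ⟫).im := by
    rw [inner_smul_right]
    simp only [RCLike.re_to_complex, Complex.I_mul_re]
    rw [← inner_conj_symm ((ψ : H)) (B ψ), Complex.conj_im]
  rw [this]
  simp [norm_smul]
  ring


lemma norm_minusI_sq (B : H →ₗ.[ℂ] H) (ψ : B.domain) :
    ‖minusI B ψ‖ ^ 2 = ‖B ψ‖ ^ 2 + ‖(ψ : H)‖ ^ 2 - 2 * (⟪(ψ : H), B ψ⟫).im := by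
  rw [minusI_apply, @norm_sub_sq ℂ]
  have : (RCLike.re ⟪B ψ, Complex.I • (ψ:H)⟫ : ℝ) = (⟪(ψ : H), B ψ⟫).im := by
    rw [inner_smul_right]
    simp only [RCLike.re_to_complex, Complex.I_mul_re]
    rw [← inner_conj_symm ((ψ : H)) (B ψ), Complex.conj_im]
  rw [this]
  simp [norm_smul]
  ring

lemma le_norm_plusI {B : H →ₗ.[ℂ] H} (hB : Dissipative B) (ψ : B.domain) :
    ‖(ψ : H)‖ ≤ ‖plusI B ψ‖ := by
  have h := norm_plusI_sq B ψ
  nlinarith [hB ψ, norm_nonneg (B ψ), norm_nonneg (ψ : H), norm_nonneg (plusI B ψ)]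

lemma le_norm_plusI' {B : H →ₗ.[ℂ] H} (hB : Dissipative B) (ψ : B.domain) :
    ‖B ψ‖ ≤ ‖plusI B ψ‖ := by
  have h := norm_plusI_sq B ψ
  nlinarith [hB ψ, norm_nonneg (B ψ), norm_nonneg (ψ : H), norm_nonneg (plusI B ψ)]

lemma minusI_le_plusI {B : H →ₗ.[ℂ] H} (hB : Dissipative B) (ψ : B.domain) :
    ‖minusI B ψ‖ ≤ ‖plusI B ψ‖ := by
  have h := norm_plusI_sq B ψ
  have h2 := norm_minusI_sq B ψ
  nlinarith [hB ψ, norm_nonneg (minusI B ψ), norm_nonneg (plusI B ψ)]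

lemma plusI_injective {B : H →ₗ.[ℂ] H} (hB : Dissipative B) :
    Function.Injective (plusI B) := by
  intro x y hxy
  have : ‖((x - y : B.domain) : H)‖ ≤ ‖plusI B (x - y)‖ := le_norm_plusI hB _
  rw [map_sub, hxy, sub_self, norm_zero] at this
  have hx : ((x - y : B.domain) : H) = 0 := norm_le_zero_iff.mp this
  exact Subtype.ext (by simpa [sub_eq_zero] using hx)


lemma max_of_surj {B : H →ₗ.[ℂ] H} (hB : Dissipative B)
    (hsurj : LinearMap.range (plusI B) = ⊤) : MaximallyDissipative B := by
  refine ⟨hB, fun C hle hC => ?_⟩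
  refine (LinearPMap.eq_of_le_of_domain_eq hle ?_).symm
  refine le_antisymm hle.1 ?_
  intro x hx
  set φ : C.domain := ⟨x, hx⟩
  obtain ⟨ψ, hψ⟩ : ∃ ψ : B.domain, plusI B ψ = plusI C φ := by
    have h : plusI C φ ∈ LinearMap.range (plusI B) := hsurj ▸ Submodule.mem_top
    exact h
  have hmem : (ψ : H) ∈ C.domain := hle.1 ψ.2
  set ψ' : C.domain := ⟨(ψ : H), hmem⟩
  have hval : C ψ' = B ψ := (hle.2 rfl).symm
  have heq : plusI C ψ' = plusI C φ := by
    rw [← hψ, plusI_apply, plusI_apply, hval]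
  have h2 : ψ' = φ := plusI_injective hC heq
  have h3 : x = (ψ : H) := (congrArg Subtype.val h2).symm
  rw [h3]
  exact ψ.2

open ContinuousLinearMap in
lemma adjoint_fixed {S : H →L[ℂ] H} (hS : ‖S‖ ≤ 1) {x : H} (hx : S x = x) :
    ContinuousLinearMap.adjoint S x = x := by
  have hnadj : ‖ContinuousLinearMap.adjoint S‖ ≤ 1 := by
    rw [LinearIsometryEquiv.norm_map ContinuousLinearMap.adjoint S]; exact hS
  have h1 : ‖ContinuousLinearMap.adjoint S x‖ ≤ ‖x‖ := by
    calc ‖ContinuousLinearMap.adjoint S x‖ ≤ ‖ContinuousLinearMap.adjoint S‖ * ‖x‖ :=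
      le_opNorm _ _
    _ ≤ 1 * ‖x‖ := by nlinarith [norm_nonneg x]
    _ = ‖x‖ := one_mul _
  have hre : (RCLike.re ⟪ContinuousLinearMap.adjoint S x, x⟫ : ℝ) = ‖x‖ ^ 2 := by
    rw [ContinuousLinearMap.adjoint_inner_left, hx]
    exact_mod_cast inner_self_eq_norm_sq (𝕜 := ℂ) x
  have key : ‖ContinuousLinearMap.adjoint S x - x‖ ^ 2 ≤ 0 := by
    rw [@norm_sub_sq ℂ, hre]
    nlinarith [norm_nonneg x, norm_nonneg (ContinuousLinearMap.adjoint S x)]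
  have h0 : ‖ContinuousLinearMap.adjoint S x - x‖ = 0 := by
    nlinarith [norm_nonneg (ContinuousLinearMap.adjoint S x - x)]
  exact sub_eq_zero.mp (norm_le_zero_iff.mp h0.le)

set_option maxHeartbeats 1600000 in
lemma exists_contraction {B : H →ₗ.[ℂ] H} (hB : Dissipative B) :
    ∃ T : H →L[ℂ] H, (∀ x, ‖T x‖ ≤ ‖x‖) ∧ ∀ ψ : B.domain, T (plusI B ψ) = minusI B ψ := by
  classical
  set R₀ := LinearMap.range (plusI B) with hR₀
  set M := R₀.topologicalClosure with hM
  haveI : CompleteSpace M :=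
    (Submodule.isClosed_topologicalClosure R₀).completeSpace_coe
  set e : B.domain ≃ₗ[ℂ] R₀ := LinearEquiv.ofInjective (plusI B) (plusI_injective hB) with he
  set T₀ : ↥R₀ →ₗ[ℂ] H := (minusI B) ∘ₗ (e.symm : ↥R₀ →ₗ[ℂ] B.domain) with hT₀def
  have hcoe : ∀ ψ : B.domain, ((e ψ : R₀) : H) = plusI B ψ := fun ψ => rfl
  have hT₀ : ∀ x : R₀, ‖T₀ x‖ ≤ 1 * ‖x‖ := by
    intro x
    have h1 : plusI B (e.symm x) = (x : H) := by
      rw [← hcoe (e.symm x), e.apply_symm_apply]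
    have h2 : T₀ x = minusI B (e.symm x) := rfl
    rw [h2, one_mul]
    calc ‖minusI B (e.symm x)‖ ≤ ‖plusI B (e.symm x)‖ := minusI_le_plusI hB _
    _ = ‖(x : H)‖ := by rw [h1]
  set T₀c : ↥R₀ →L[ℂ] H := T₀.mkContinuous 1 hT₀ with hT₀c
  set incl : ↥R₀ →L[ℂ] ↥M :=
    LinearMap.mkContinuous (Submodule.inclusion (R₀.le_topologicalClosure)) 1
      (fun x => by rw [one_mul]; rfl) with hincl
  have hisom : Isometry incl := AddMonoidHomClass.isometry_of_norm _ (fun x => rfl)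
  have hdr : DenseRange incl := by
    intro y
    have hy : (y : H) ∈ closure (R₀ : Set H) := by
      rw [← Submodule.topologicalClosure_coe]
      exact y.2
    rw [mem_closure_iff_seq_limit] at hy
    obtain ⟨r, hr, hlim⟩ := hy
    rw [mem_closure_iff_seq_limit]
    refine ⟨fun n => incl ⟨r n, hr n⟩, fun n => ⟨⟨r n, hr n⟩, rfl⟩, ?_⟩
    rw [tendsto_subtype_rng]
    exact hlim
  set Tbar : ↥M →L[ℂ] H := T₀c.extend incl with hTbar
  have hTbar_eq : ∀ x : ↥R₀, Tbar (incl x) = T₀c x := fun x =>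
    ContinuousLinearMap.extend_eq T₀c hdr hisom.isUniformInducing x
  have hTbar_norm : ∀ y : ↥M, ‖Tbar y‖ ≤ ‖(y : H)‖ := by
    intro y
    refine DenseRange.induction_on hdr y ?_ ?_
    · exact isClosed_le (continuous_norm.comp Tbar.continuous)
        (continuous_norm.comp continuous_subtype_val)
    · intro x
      rw [hTbar_eq x]
      have h := hT₀ x
      rw [one_mul] at h
      exact h
  refine ⟨Tbar.comp (M.orthogonalProjectionOnto), ?_, ?_⟩
  · intro x
    calc ‖Tbar (M.orthogonalProjectionOnto x)‖ ≤ ‖((M.orthogonalProjectionOnto x : ↥M) : H)‖ :=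
      hTbar_norm _
    _ ≤ ‖x‖ := by
      have h := ContinuousLinearMap.le_opNorm (M.orthogonalProjectionOnto) x
      have h2 := Submodule.orthogonalProjectionOnto_norm_le M
      calc ‖((M.orthogonalProjectionOnto x : ↥M) : H)‖ = ‖M.orthogonalProjectionOnto x‖ := rfl
      _ ≤ ‖M.orthogonalProjectionOnto‖ * ‖x‖ := h
      _ ≤ 1 * ‖x‖ := by nlinarith [norm_nonneg x]
      _ = ‖x‖ := one_mul _
  · intro ψ
    have hmem : plusI B ψ ∈ M := R₀.le_topologicalClosure (LinearMap.mem_range_self _ ψ)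
    have hP : M.orthogonalProjectionOnto (plusI B ψ) = ⟨plusI B ψ, hmem⟩ :=
      Submodule.orthogonalProjectionOnto_mem_subspace_eq_self (⟨plusI B ψ, hmem⟩ : M)
    have hinclval : incl (e ψ) = ⟨plusI B ψ, hmem⟩ := rfl
    calc Tbar.comp (M.orthogonalProjectionOnto) (plusI B ψ)
        = Tbar ⟨plusI B ψ, hmem⟩ := by rw [ContinuousLinearMap.comp_apply, hP]
    _ = Tbar (incl (e ψ)) := by rw [hinclval]
    _ = T₀c (e ψ) := hTbar_eq _
    _ = minusI B (e.symm (e ψ)) := rfl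
    _ = minusI B ψ := by rw [e.symm_apply_apply]

lemma two_I_ne : (2 * Complex.I) ≠ 0 := by simp [Complex.I_ne_zero]

set_option maxHeartbeats 1600000 in
lemma exists_surj_ext {B : H →ₗ.[ℂ] H} (hB : Dissipative B)
    (hdense : Dense (B.domain : Set H)) :
    ∃ C : H →ₗ.[ℂ] H, B ≤ C ∧ Dissipative C ∧ LinearMap.range (plusI C) = ⊤ := by
  obtain ⟨T, hTnorm, hTfix⟩ := exists_contraction hB
  have hTop : ‖T‖ ≤ 1 := T.opNorm_le_bound zero_le_one (fun x => by rw [one_mul]; exact hTnorm x)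
  set L : H →ₗ[ℂ] H := LinearMap.id - T.toLinearMap with hL
  have hLapply : ∀ u, L u = u - T u := fun u => rfl
  have hLinj : Function.Injective L := by
    have hker : ∀ z, L z = 0 → z = 0 := by
      intro z hz
      have hfix : T z = z := by
        have h := hLapply z
        rw [hz] at h
        have := h.symm
        rwa [sub_eq_zero, eq_comm] at this
      have hadj : ContinuousLinearMap.adjoint T z = z := adjoint_fixed hTop hfix
      have hzero : ∀ ψ : B.domain, ⟪z, (ψ : H)⟫ = 0 := by
        intro ψ
        have h2 : plusI B ψ - minusI B ψ = (2 * Complex.I) • (ψ : H) := by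
          rw [plusI_apply, minusI_apply, mul_smul, two_smul]
          abel
        have h3 : ⟪z, plusI B ψ⟫ = ⟪z, minusI B ψ⟫ := by
          conv_rhs => rw [← hTfix ψ, ← ContinuousLinearMap.adjoint_inner_left, hadj]
        have h4 : ⟪z, (2 * Complex.I) • (ψ : H)⟫ = 0 := by
          rw [← h2, inner_sub_right, h3, sub_self]
        rw [inner_smul_right] at h4
        exact (mul_eq_zero.mp h4).resolve_left two_I_ne
      exact hdense.eq_zero_of_inner_left ℂ (fun v hv => hzero ⟨v, hv⟩)
    intro x y hxy
    have h : L (x - y) = 0 := by rw [map_sub, hxy, sub_self]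
    exact sub_eq_zero.mp (hker _ h)
  set eL : H ≃ₗ[ℂ] LinearMap.range L := LinearEquiv.ofInjective L hLinj with heL
  set K : H →ₗ[ℂ] H := Complex.I • (LinearMap.id + T.toLinearMap) with hK
  have hKapply : ∀ u, K u = Complex.I • (u + T u) := fun u => rfl
  set C : H →ₗ.[ℂ] H :=
    ⟨LinearMap.range L, K ∘ₗ (eL.symm : ↥(LinearMap.range L) →ₗ[ℂ] H)⟩ with hC
  have hCapply : ∀ y : C.domain, C y = K (eL.symm y) := fun y => rfl
  have hCLu : ∀ (u : H) (h : L u ∈ LinearMap.range L), C ⟨L u, h⟩ = K u := by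
    intro u h
    have h1 : eL u = ⟨L u, h⟩ := Subtype.ext rfl
    have h2 : eL.symm ⟨L u, h⟩ = u := by rw [← h1, eL.symm_apply_apply]
    rw [hCapply ⟨L u, h⟩, h2]
  have hLplus : ∀ ψ : B.domain, L (plusI B ψ) = (2 * Complex.I) • (ψ : H) := by
    intro ψ
    rw [hLapply, hTfix ψ, plusI_apply, minusI_apply, mul_smul, two_smul]
    abel
  have hKplus : ∀ ψ : B.domain, K (plusI B ψ) = (2 * Complex.I) • B ψ := by
    intro ψ
    rw [hKapply, hTfix ψ, plusI_apply, minusI_apply]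
    have h : (B ψ + Complex.I • (ψ : H)) + (B ψ - Complex.I • (ψ : H)) = (2 : ℂ) • B ψ := by
      rw [two_smul]; abel
    rw [h, smul_smul]
    ring_nf
  have hL2 : ∀ ψ : B.domain, L ((2 * Complex.I)⁻¹ • plusI B ψ) = (ψ : H) := by
    intro ψ
    rw [map_smul, hLplus, smul_smul, inv_mul_cancel₀ two_I_ne, one_smul]
  have hmemd : ∀ ψ : B.domain, (ψ : H) ∈ LinearMap.range L := by
    intro ψ
    exact ⟨(2 * Complex.I)⁻¹ • plusI B ψ, hL2 ψ⟩
  have hle : B ≤ C := by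
    constructor
    · intro x hx
      exact hmemd ⟨x, hx⟩
    · intro x y hxy
      have h1 : L (eL.symm y) = (y : H) := congrArg Subtype.val (eL.apply_symm_apply y)
      have h3 : eL.symm y = (2 * Complex.I)⁻¹ • plusI B x := by
        apply hLinj
        rw [h1, hL2 x, hxy]
      rw [hCapply y, h3, map_smul, hKplus, smul_smul, inv_mul_cancel₀ two_I_ne, one_smul]
  have hdiss : Dissipative C := by
    intro ψ
    set u := eL.symm ψ with hu
    have h1 : (ψ : H) = u - T u := by
      have h := congrArg Subtype.val (eL.apply_symm_apply ψ)
      rw [← h]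
      rfl
    have h2 : C ψ = Complex.I • (u + T u) := hCapply ψ
    rw [h1, h2]
    have him : (⟪u - T u, Complex.I • (u + T u)⟫).im = ‖u‖ ^ 2 - ‖T u‖ ^ 2 := by
      rw [inner_smul_right]
      have himul : ∀ z : ℂ, (Complex.I * z).im = z.re := fun z => by
        simp [Complex.mul_im]
      rw [himul]
      rw [inner_sub_left, inner_add_right, inner_add_right]
      have ha : (⟪u, u⟫).re = ‖u‖ ^ 2 := by
        have h := inner_self_eq_norm_sq (𝕜 := ℂ) u
        simpa using h
      have hb : (⟪T u, T u⟫).re = ‖T u‖ ^ 2 := by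
        have h := inner_self_eq_norm_sq (𝕜 := ℂ) (T u)
        simpa using h
      have hc : (⟪T u, u⟫).re = (⟪u, T u⟫).re := by
        rw [← inner_conj_symm u (T u), Complex.conj_re]
      simp only [Complex.sub_re, Complex.add_re]
      rw [ha, hb, hc]
      ring
    rw [him]
    have h := hTnorm u
    nlinarith [norm_nonneg u, norm_nonneg (T u)]
  have hsurj : LinearMap.range (plusI C) = ⊤ := by
    rw [eq_top_iff]
    rintro x -
    set u := (2 * Complex.I)⁻¹ • x with hu
    have hmem : L u ∈ LinearMap.range L := LinearMap.mem_range_self _ u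
    refine ⟨⟨L u, hmem⟩, ?_⟩
    rw [plusI_apply]
    have hcoe : ((⟨L u, hmem⟩ : C.domain) : H) = L u := rfl
    rw [hcoe, hCLu u hmem, hKapply, hLapply]
    have h : Complex.I • (u + T u) + Complex.I • (u - T u) = (2 * Complex.I) • u := by
      rw [smul_add, smul_sub, mul_smul, two_smul]
      abel
    rw [h, hu, smul_smul, mul_inv_cancel₀ two_I_ne, one_smul]
  exact ⟨C, hle, hdiss, hsurj⟩

lemma range_plusI_closed {A : H →ₗ.[ℂ] H} (hA : Dissipative A) (hclosed : A.IsClosed) :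
    IsClosed ((LinearMap.range (plusI A) : Submodule ℂ H) : Set H) := by
  refine isClosed_of_closure_subset ?_
  intro x hx
  rw [mem_closure_iff_seq_limit] at hx
  obtain ⟨r, hr, hlim⟩ := hx
  choose ψ hψ using hr
  have hcr : CauchySeq r := hlim.cauchySeq
  have key : ∀ (g : A.domain → H), (∀ φ : A.domain, ‖g φ‖ ≤ ‖plusI A φ‖) →
      (∀ m n, g (ψ m - ψ n) = g (ψ m) - g (ψ n)) → CauchySeq (fun n => g (ψ n)) := by
    intro g hg hadd
    rw [Metric.cauchySeq_iff] at hcr ⊢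
    intro ε hε
    obtain ⟨N, hN⟩ := hcr ε hε
    refine ⟨N, fun m hm n hn => ?_⟩
    have hb := hg (ψ m - ψ n)
    rw [hadd m n] at hb
    have hplus : plusI A (ψ m - ψ n) = r m - r n := by rw [map_sub, hψ, hψ]
    rw [hplus] at hb
    calc dist (g (ψ m)) (g (ψ n)) = ‖g (ψ m) - g (ψ n)‖ := dist_eq_norm _ _
    _ ≤ ‖r m - r n‖ := hb
    _ = dist (r m) (r n) := (dist_eq_norm _ _).symm
    _ < ε := hN m hm n hn
  have hcψ : CauchySeq (fun n => ((ψ n : H))) :=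
    key (fun φ => (φ : H)) (fun φ => le_norm_plusI hA φ) (fun m n => rfl)
  have hcA : CauchySeq (fun n => A (ψ n)) :=
    key (fun φ => A φ) (fun φ => le_norm_plusI' hA φ) (fun m n => LinearPMap.map_sub A _ _)
  obtain ⟨y1, hy1⟩ := cauchySeq_tendsto_of_complete hcψ
  obtain ⟨y2, hy2⟩ := cauchySeq_tendsto_of_complete hcA
  have hgr : (y1, y2) ∈ A.graph := by
    have hcl : _root_.IsClosed (A.graph : Set (H × H)) := hclosed
    exact hcl.mem_of_tendsto (hy1.prodMk_nhds hy2)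
      (Filter.Eventually.of_forall (fun n => A.mem_graph (ψ n)))
  rw [LinearPMap.mem_graph_iff] at hgr
  obtain ⟨φ, hφ1, hφ2⟩ := hgr
  refine ⟨φ, ?_⟩
  have hx2 : Filter.Tendsto r Filter.atTop (nhds (y2 + Complex.I • y1)) := by
    have h := hy2.add (hy1.const_smul (Complex.I))
    have heq : ∀ n, r n = A (ψ n) + Complex.I • ((ψ n : H)) := by
      intro n
      rw [← hψ n, plusI_apply]
    simpa [← heq] using h
  have hxeq : x = y2 + Complex.I • y1 := tendsto_nhds_unique hlim hx2
  rw [plusI_apply, hφ2, hφ1, hxeq]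



lemma orthogonal_range_plusI {A : H →ₗ.[ℂ] H} (hdense : Dense (A.domain : Set H)) :
    Submodule.map A.adjoint.domain.subtype (eigenspaceI A)
      = (LinearMap.range (plusI A))ᗮ := by
  ext x
  constructor
  · rintro ⟨y, hy, rfl⟩
    have hAy : A.adjoint y = Complex.I • (y : H) := by
      rw [SetLike.mem_coe, eigenspaceI, LinearMap.mem_ker, LinearMap.sub_apply, LinearMap.smul_apply,
        LinearPMap.toFun_eq_coe, Submodule.subtype_apply] at hy
      exact sub_eq_zero.mp hy
    rw [Submodule.mem_orthogonal' _ _]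
    rintro u ⟨ψ, rfl⟩
    rw [plusI_apply, inner_add_right, inner_smul_right]
    have hfa := (LinearPMap.adjoint_isFormalAdjoint hdense) y ψ
    -- hfa : ⟪A.adjoint y, ψ⟫ = ⟪↑y, A ψ⟫
    rw [Submodule.subtype_apply, ← hfa, hAy, inner_smul_left, Complex.conj_I]
    ring
  · intro hx
    have hx' : ∀ ψ : A.domain, ⟪x, plusI A ψ⟫ = 0 := fun ψ =>
      ((Submodule.mem_orthogonal' _ _).mp hx) _ (LinearMap.mem_range_self _ ψ)
    have hw : ∀ ψ : A.domain, ⟪Complex.I • x, (ψ : H)⟫ = ⟪x, A ψ⟫ := by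
      intro ψ
      have h := hx' ψ
      rw [plusI_apply, inner_add_right, inner_smul_right] at h
      have h2 : ⟪x, A ψ⟫ = -(Complex.I * ⟪x, (ψ : H)⟫) := eq_neg_of_add_eq_zero_left h
      rw [inner_smul_left, h2, Complex.conj_I]
      ring
    have hxdom : x ∈ A.adjoint.domain :=
      LinearPMap.mem_adjoint_domain_of_exists x ⟨Complex.I • x, fun ψ => hw ψ⟩
    have hval : A.adjoint ⟨x, hxdom⟩ = Complex.I • x :=
      LinearPMap.adjoint_apply_eq hdense _ (fun ψ => hw ψ)
    refine ⟨⟨x, hxdom⟩, ?_, rfl⟩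
    rw [SetLike.mem_coe, eigenspaceI, LinearMap.mem_ker, LinearMap.sub_apply, LinearMap.smul_apply,
      LinearPMap.toFun_eq_coe, Submodule.subtype_apply, hval, sub_self]

set_option maxHeartbeats 1600000 in
/-- A dissipative extension `Â` of a closed dissipative operator `A` with
finite-dimensional `ker(A* - i)` is maximally dissipative iff
`dim D(Â)/D(A) = dim ker(A* - i)`. -/
theorem statement0 [TopologicalSpace.SeparableSpace H]
    (A Ahat : H →ₗ.[ℂ] H)
    (hdense : Dense (A.domain : Set H)) (hclosed : A.IsClosed) (hdiss : Dissipative A)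
    (hfin : FiniteDimensional ℂ (eigenspaceI A))
    (hext : A ≤ Ahat) (hhatdiss : Dissipative Ahat) :
    MaximallyDissipative Ahat ↔
      Module.rank ℂ (↥Ahat.domain ⧸ Submodule.comap Ahat.domain.subtype A.domain)
        = Module.rank ℂ (eigenspaceI A) := by
  classical
  have hsub : (A.domain : Set H) ⊆ (Ahat.domain : Set H) := fun x hx => hext.1 hx
  have hdense' : Dense (Ahat.domain : Set H) := hdense.mono hsub
  set R : Submodule ℂ H := LinearMap.range (plusI A) with hR
  have hRclosed : IsClosed (R : Set H) := range_plusI_closed hdiss hclosed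
  haveI : CompleteSpace R := hRclosed.completeSpace_coe
  have hcompl : IsCompl R Rᗮ := Submodule.isCompl_orthogonal_of_hasOrthogonalProjection
  set qe : (H ⧸ R) ≃ₗ[ℂ] Rᗮ := Submodule.quotientEquivOfIsCompl R Rᗮ hcompl with hqe
  have horth : Submodule.map A.adjoint.domain.subtype (eigenspaceI A) = Rᗮ :=
    orthogonal_range_plusI hdense
  set ee : eigenspaceI A ≃ₗ[ℂ] Submodule.map A.adjoint.domain.subtype (eigenspaceI A) :=
    Submodule.equivMapOfInjective _ (Submodule.injective_subtype _) _ with hee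
  set fullEquiv : (H ⧸ R) ≃ₗ[ℂ] eigenspaceI A :=
    (qe.trans (LinearEquiv.ofEq _ _ horth).symm).trans ee.symm with hfe
  have hrankN : Module.rank ℂ (eigenspaceI A) = Module.rank ℂ (H ⧸ R) :=
    (fullEquiv.symm.rank_eq).symm.symm
  haveI hfinQ : FiniteDimensional ℂ (H ⧸ R) := Module.Finite.equiv fullEquiv.symm
  set f : Ahat.domain →ₗ[ℂ] H ⧸ R := R.mkQ ∘ₗ plusI Ahat with hf
  have hker : LinearMap.ker f = Submodule.comap Ahat.domain.subtype A.domain := by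
    ext ψ
    rw [LinearMap.mem_ker, hf, LinearMap.comp_apply, Submodule.mkQ_apply,
      Submodule.Quotient.mk_eq_zero, Submodule.mem_comap, Submodule.subtype_apply]
    constructor
    · rintro ⟨φ, hφ⟩
      have hmem : (φ : H) ∈ Ahat.domain := hext.1 φ.2
      have hval : A φ = Ahat ⟨(φ : H), hmem⟩ := hext.2 rfl
      have heq : plusI Ahat ⟨(φ : H), hmem⟩ = plusI Ahat ψ := by
        rw [plusI_apply, ← hval]
        rw [← hφ, plusI_apply]
      have h2 := plusI_injective hhatdiss heq
      have h3 : (ψ : H) = (φ : H) := (congrArg Subtype.val h2).symm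
      rw [h3]
      exact φ.2
    · intro h
      refine ⟨⟨(ψ : H), h⟩, ?_⟩
      have hval : A ⟨(ψ : H), h⟩ = Ahat ψ := hext.2 rfl
      rw [plusI_apply, plusI_apply, hval]
  have hrankQ : Module.rank ℂ (↥Ahat.domain ⧸ Submodule.comap Ahat.domain.subtype A.domain)
      = Module.rank ℂ (LinearMap.range f) := by
    rw [← hker]
    exact (LinearMap.quotKerEquivRange f).rank_eq
  have hrange : LinearMap.range f = Submodule.map R.mkQ (LinearMap.range (plusI Ahat)) := by
    rw [hf, LinearMap.range_comp]
  have hRle : R ≤ LinearMap.range (plusI Ahat) := by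
    rintro r ⟨φ, rfl⟩
    have hmem : (φ : H) ∈ Ahat.domain := hext.1 φ.2
    refine ⟨⟨(φ : H), hmem⟩, ?_⟩
    have hval : A φ = Ahat ⟨(φ : H), hmem⟩ := hext.2 rfl
    rw [plusI_apply, plusI_apply, ← hval]
  constructor
  · intro hmax
    obtain ⟨C, hleC, hCdiss, hCsurj⟩ := exists_surj_ext hhatdiss hdense'
    have hCA : C = Ahat := hmax.2 C hleC hCdiss
    rw [hCA] at hCsurj
    have htop : LinearMap.range f = ⊤ := by
      rw [hrange, hCsurj, Submodule.map_top, Submodule.range_mkQ]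
    rw [hrankQ, htop, hrankN]
    exact Submodule.topEquiv.rank_eq
  · intro hrank
    have h1 : Module.rank ℂ (LinearMap.range f) = Module.rank ℂ (H ⧸ R) := by
      rw [← hrankQ, hrank, hrankN]
    have h2 : LinearMap.range f = ⊤ := by
      apply Submodule.eq_top_of_finrank_eq
      have hfr : ((Module.finrank ℂ (LinearMap.range f) : Cardinal))
          = ((Module.finrank ℂ (H ⧸ R) : Cardinal)) := by
        rw [Module.finrank_eq_rank, Module.finrank_eq_rank, h1]
      exact_mod_cast hfr
    have hsurj : LinearMap.range (plusI Ahat) = ⊤ := by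
      rw [eq_top_iff]
      rintro x -
      have hmem : R.mkQ x ∈ Submodule.map R.mkQ (LinearMap.range (plusI Ahat)) := by
        rw [← hrange, h2]
        trivial
      obtain ⟨m, hm, hmq⟩ := hmem
      have hq : (Submodule.Quotient.mk x : H ⧸ R) = Submodule.Quotient.mk m := by
        rw [← Submodule.mkQ_apply, ← Submodule.mkQ_apply, hmq]
      have hxm : x - m ∈ R := (Submodule.Quotient.eq R).mp hq
      have hx : x = (x - m) + m := by abel
      rw [hx]
      exact add_mem (hRle hxm) hm
    exact max_of_surj hhatdiss hsurj
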